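/- Let q and q' be probability measures on ℝ^m (EuclideanSpace ℝ (Fin m)), each absolutely continuous with respect to Lebesgue measure with densities f and f' satisfying ∫ f |log f| < ∞ and ∫ f' |log f'| < ∞, and each with finite second moment. Let z_1, …, z_n be points of ℝ^m, and assume Σ_{i=1}^n ∫ ‖z − z_i‖² dq'(z) > 0. Then lim_{ε → 0⁺} [ Σ_{i=1}^n KL(q ‖ N(z_i, εI)) ] / [ Σ_{i=1}^n KL(q' ‖ N(z_i, εI)) ] = [ Σ_{i=1}^n ∫ ‖z − z_i‖² dq(z) ] / [ Σ_{i=1}^n ∫ ‖z − z_i‖² dq'(z) ], where the Kullback–Leibler divergences are taken as real numbers (they are finite for all sufficiently small ε > 0). -/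

import Mathlib

open MeasureTheory ProbabilityTheory Filter Real
open scoped ENNReal NNReal

lemma lintegral_pi_prod {n : ℕ} (g : Fin n → ℝ → ℝ≥0∞) (hg : ∀ i, Measurable (g i)) :
    ∫⁻ x : Fin n → ℝ, ∏ i, g i (x i) ∂(Measure.pi fun _ => (volume : Measure ℝ))
      = ∏ i, ∫⁻ t, g i t := by
  induction n with
  | zero => simp [lintegral_const]
  | succ n ih =>
    have hmp := (measurePreserving_piFinSuccAbove (fun _ : Fin (n+1) => (volume : Measure ℝ)) 0)
    have hmeas : Measurable (fun p : ℝ × (Fin n → ℝ) => g 0 p.1 * ∏ i, g i.succ (p.2 i)) := by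
      exact ((hg 0).comp measurable_fst).mul
        (Finset.measurable_prod _ fun i _ => (hg i.succ).comp (measurable_pi_apply i |>.comp measurable_snd))
    have := hmp.lintegral_comp (f := fun p : ℝ × (Fin n → ℝ) => g 0 p.1 * ∏ i, g i.succ (p.2 i)) hmeas
    rw [show (∫⁻ x : Fin (n+1) → ℝ, ∏ i, g i (x i) ∂(Measure.pi fun _ => (volume : Measure ℝ)))
        = ∫⁻ x : Fin (n+1) → ℝ, g 0 ((MeasurableEquiv.piFinSuccAbove (fun _ => ℝ) 0) x).1
            * ∏ i, g i.succ (((MeasurableEquiv.piFinSuccAbove (fun _ => ℝ) 0) x).2 i)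
            ∂(Measure.pi fun _ => (volume : Measure ℝ)) from by
      congr 1; ext x
      simp [MeasurableEquiv.piFinSuccAbove, Fin.prod_univ_succ, Fin.zero_succAbove, Fin.tail]]
    rw [this]; beta_reduce
    have h2 := lintegral_prod_mul (μ := volume) (ν := Measure.pi fun _ : Fin n => volume)
      (f := g 0) (g := fun y : Fin n → ℝ => ∏ i, g i.succ (y i)) (hg 0).aemeasurable
      (Finset.measurable_prod _ fun i _ => (hg i.succ).comp (measurable_pi_apply i)).aemeasurable
    beta_reduce at h2
    rw [h2, ih (fun i => g i.succ) (fun i => hg i.succ), Fin.prod_univ_succ]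

lemma pi_withDensity_fin {n : ℕ} (g : Fin n → ℝ → ℝ≥0∞) (hg : ∀ i, Measurable (g i))
    (hgt : ∀ i x, g i x ≠ ∞) :
    Measure.pi (fun i => (volume : Measure ℝ).withDensity (g i))
      = (Measure.pi fun _ : Fin n => (volume : Measure ℝ)).withDensity
          (fun x => ∏ i, g i (x i)) := by
  haveI : ∀ i : Fin n, SigmaFinite ((volume : Measure ℝ).withDensity (g i)) := fun i =>
    SigmaFinite.withDensity_of_ne_top (Filter.Eventually.of_forall (hgt i))
  refine Measure.pi_eq fun s hs => ?_
  rw [withDensity_apply _ (MeasurableSet.univ_pi hs)]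
  have hind : ∀ x : Fin n → ℝ, (Set.pi Set.univ s).indicator (fun x => ∏ i, g i (x i)) x
      = ∏ i, (s i).indicator (g i) (x i) := by
    intro x
    by_cases hx : x ∈ Set.pi Set.univ s
    · rw [Set.indicator_of_mem hx]
      exact Finset.prod_congr rfl fun i _ =>
        (Set.indicator_of_mem (hx i (Set.mem_univ i)) _).symm
    · rw [Set.indicator_of_notMem hx]
      simp only [Set.mem_pi, Set.mem_univ, forall_true_left, not_forall] at hx
      obtain ⟨i, hi⟩ := hx
      exact (Finset.prod_eq_zero (Finset.mem_univ i)
        (Set.indicator_of_notMem hi _)).symm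
  rw [← lintegral_indicator (f := fun x => ∏ i, g i (x i)) (MeasurableSet.univ_pi hs), lintegral_congr hind,
    lintegral_pi_prod (fun i => (s i).indicator (g i))
      (fun i => (hg i).indicator (hs i))]
  exact Finset.prod_congr rfl fun i _ => by
    rw [lintegral_indicator (hs i), withDensity_apply _ (hs i)]

lemma map_equiv_withDensity {α β : Type*} [MeasurableSpace α] [MeasurableSpace β]
    (e : α ≃ᵐ β) (μ : Measure α) (g : β → ℝ≥0∞) (hg : Measurable g) :
    Measure.map e (μ.withDensity (fun x => g (e x))) = (Measure.map e μ).withDensity g := by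
  ext s hs
  rw [Measure.map_apply e.measurable hs, withDensity_apply _ hs,
    withDensity_apply _ (e.measurable hs), setLIntegral_map hs hg e.measurable]


/-- The Gaussian measure `N(a, vI)` on `ℝ^m`: the product of one-dimensional Gaussians
with means `a i` and common variance `v`, transported to `EuclideanSpace ℝ (Fin m)`. -/
noncomputable def gaussianE {m : ℕ} (a : EuclideanSpace ℝ (Fin m)) (v : NNReal) :
    Measure (EuclideanSpace ℝ (Fin m)) :=
  Measure.map (MeasurableEquiv.toLp 2 (Fin m → ℝ))
    (Measure.pi fun i => gaussianReal (a i) v)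

/-- The Kullback–Leibler divergence `∫ log (dp/dq) dp`, as a real number. -/
noncomputable def klReal {α : Type*} [MeasurableSpace α] (p q : Measure α) : ℝ :=
  ∫ z, Real.log (p.rnDeriv q z).toReal ∂p

/-- For probability measures `q, q'` on `ℝ^m` with Lebesgue densities of
finite entropy integral and finite second moments, and points `z_1, …, z_n` with
`Σ_i ∫ ‖z - z_i‖² ∂q' > 0`, the ratio of the summed KL divergences to the Gaussians
`N(z_i, εI)` converges, as `ε → 0⁺`, to the ratio of the summed expected squared
distances. -/
lemma gaussianE_eq {m : ℕ} (a : EuclideanSpace ℝ (Fin m)) {v : NNReal} (hv : v ≠ 0) :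
    gaussianE a v = volume.withDensity
      (fun x : EuclideanSpace ℝ (Fin m) =>
        ENNReal.ofReal ((√(2 * π * v))⁻¹ ^ m * rexp (- ‖x - a‖ ^ 2 / (2 * v)))) := by
  have hpdf : ∀ x : EuclideanSpace ℝ (Fin m),
      ∏ i, gaussianPDF (a i) v (x i)
        = ENNReal.ofReal ((√(2 * π * v))⁻¹ ^ m * rexp (- ‖x - a‖ ^ 2 / (2 * v))) := by
    intro x
    simp only [gaussianPDF_def]
    rw [← ENNReal.ofReal_prod_of_nonneg (fun i _ => gaussianPDFReal_nonneg _ _ _)]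
    congr 1
    simp only [gaussianPDFReal]
    rw [Finset.prod_mul_distrib, Finset.prod_const, ← Real.exp_sum, Finset.card_univ,
      Fintype.card_fin]
    congr 1
    have hnorm : ‖x - a‖ ^ 2 = ∑ i, (x i - a i) ^ 2 := by
      rw [EuclideanSpace.norm_eq, Real.sq_sqrt (by positivity)]
      exact Finset.sum_congr rfl fun i _ => by simp [PiLp.sub_apply, sq_abs]
    rw [hnorm]
    congr 1
    rw [← Finset.sum_div, Finset.sum_neg_distrib, neg_div]
  have hGc : Measurable fun x : EuclideanSpace ℝ (Fin m) =>
      ENNReal.ofReal ((√(2 * π * v))⁻¹ ^ m * rexp (- ‖x - a‖ ^ 2 / (2 * v))) := by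
    apply Measurable.ennreal_ofReal
    apply Continuous.measurable
    fun_prop
  set e := MeasurableEquiv.toLp 2 (Fin m → ℝ)
  rw [gaussianE]
  simp_rw [gaussianReal_of_var_ne_zero _ hv]
  rw [pi_withDensity_fin _ (fun i => measurable_gaussianPDF _ _)
    (fun i x => ENNReal.ofReal_ne_top)]
  have hfun : (fun y : Fin m → ℝ => ∏ i, gaussianPDF (a i) v (y i))
      = fun y => ENNReal.ofReal ((√(2 * π * v))⁻¹ ^ m
          * rexp (- ‖e y - a‖ ^ 2 / (2 * v))) := by
    funext y
    exact hpdf (e y)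
  rw [hfun]
  have := map_equiv_withDensity e (Measure.pi fun _ : Fin m => (volume : Measure ℝ))
    (fun x => ENNReal.ofReal ((√(2 * π * v))⁻¹ ^ m * rexp (- ‖x - a‖ ^ 2 / (2 * v)))) hGc
  rw [this]
  congr 1
  rw [← MeasureTheory.volume_pi]
  exact (MeasurePreserving.symm _ (EuclideanSpace.volume_preserving_symm_measurableEquiv_toLp (Fin m))).map_eq

lemma integrable_sq_sub {m : ℕ} {q : Measure (EuclideanSpace ℝ (Fin m))}
    [IsProbabilityMeasure q] (hmom : Integrable (fun z => ‖z‖ ^ 2) q)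
    (a : EuclideanSpace ℝ (Fin m)) :
    Integrable (fun x => ‖x - a‖ ^ 2) q := by
  have h2 : Integrable (fun x : EuclideanSpace ℝ (Fin m) => 2 * ‖x‖ ^ 2 + 2 * ‖a‖ ^ 2) q :=
    (hmom.const_mul 2).add (integrable_const _)
  refine h2.mono' ?_ (ae_of_all _ fun x => ?_)
  · exact (Continuous.aestronglyMeasurable (by fun_prop))
  · have h := norm_sub_le x a
    have h0 : (0:ℝ) ≤ ‖x - a‖ := norm_nonneg _
    have h1 : (0:ℝ) ≤ ‖x‖ := norm_nonneg _
    have h3 : (0:ℝ) ≤ ‖a‖ := norm_nonneg _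
    rw [Real.norm_eq_abs, abs_of_nonneg (by positivity)]
    nlinarith [sq_nonneg (‖x‖ - ‖a‖), mul_le_mul h h h0 (by positivity : (0:ℝ) ≤ ‖x‖ + ‖a‖)]

lemma klReal_gaussianE {m : ℕ} (q : Measure (EuclideanSpace ℝ (Fin m)))
    [IsProbabilityMeasure q]
    (f : EuclideanSpace ℝ (Fin m) → ℝ) (hf0 : ∀ z, 0 ≤ f z) (hfm : Measurable f)
    (hq : q = volume.withDensity (fun z => ENNReal.ofReal (f z)))
    (hent : Integrable (fun z => f z * |Real.log (f z)|) volume)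
    (hmom : Integrable (fun z => ‖z‖ ^ 2) q)
    (a : EuclideanSpace ℝ (Fin m)) {ε : ℝ} (hε : 0 < ε) :
    klReal q (gaussianE a ε.toNNReal)
      = (∫ x, Real.log (f x) ∂q) + m * Real.log (√(2 * π * ε))
        + (∫ x, ‖x - a‖ ^ 2 ∂q) / (2 * ε) := by
  have hv : ε.toNNReal ≠ 0 := (Real.toNNReal_pos.mpr hε).ne'
  have hcoe : ((ε.toNNReal : ℝ≥0) : ℝ) = ε := Real.coe_toNNReal _ hε.le
  set GR : EuclideanSpace ℝ (Fin m) → ℝ :=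
    fun x => (√(2 * π * ε))⁻¹ ^ m * rexp (- ‖x - a‖ ^ 2 / (2 * ε)) with hGR
  have hGRpos : ∀ x, 0 < GR x := fun x => by
    have : (0:ℝ) < √(2 * π * ε) := Real.sqrt_pos.mpr (by positivity)
    positivity
  have hGRm : Measurable GR := Continuous.measurable (by fun_prop)
  have hgauss : gaussianE a ε.toNNReal
      = volume.withDensity (fun x => ENNReal.ofReal (GR x)) := by
    rw [gaussianE_eq a hv, hGR]
    simp_rw [hcoe]
  have hqv : q ≪ volume := by
    rw [hq]; exact withDensity_absolutelyContinuous _ _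
  have hrnq : q.rnDeriv volume =ᵐ[volume] fun x => ENNReal.ofReal (f x) := by
    rw [hq]; exact Measure.rnDeriv_withDensity volume hfm.ennreal_ofReal
  have hrn0 : q.rnDeriv (gaussianE a ε.toNNReal)
      =ᵐ[volume] fun x => (ENNReal.ofReal (GR x))⁻¹ * ENNReal.ofReal (f x) := by
    rw [hgauss]
    have h1 := Measure.rnDeriv_withDensity_right q volume
      hGRm.ennreal_ofReal.aemeasurable
      (ae_of_all _ fun x => by simpa [ENNReal.ofReal_eq_zero, not_le] using hGRpos x)
      (ae_of_all _ fun x => ENNReal.ofReal_ne_top)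
    filter_upwards [h1, hrnq] with x hx1 hx2
    rw [hx1, hx2]
  have hrn : q.rnDeriv (gaussianE a ε.toNNReal)
      =ᵐ[q] fun x => (ENNReal.ofReal (GR x))⁻¹ * ENNReal.ofReal (f x) := hqv.ae_eq hrn0
  have hfpos : ∀ᵐ x ∂q, 0 < f x := by
    rw [hq]
    have hS : MeasurableSet {x : EuclideanSpace ℝ (Fin m) | f x ≤ 0} :=
      measurableSet_le hfm measurable_const
    rw [ae_iff]
    have : {x : EuclideanSpace ℝ (Fin m) | ¬ 0 < f x}
        = {x : EuclideanSpace ℝ (Fin m) | f x ≤ 0} := by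
      ext x; simp [not_lt]
    rw [this, withDensity_apply _ hS]
    have hzero := setLIntegral_congr_fun (f := fun x => ENNReal.ofReal (f x))
      (g := fun _ => 0) (μ := volume) hS
      (fun x hx => by simpa [ENNReal.ofReal_eq_zero] using (hx : f x ≤ 0))
    simpa using hzero
  have hintlog : Integrable (fun x => Real.log (f x)) q := by
    rw [hq, integrable_withDensity_iff hfm.ennreal_ofReal
      (ae_of_all _ fun x => ENNReal.ofReal_lt_top)]
    refine hent.mono' ?_ (ae_of_all _ fun x => ?_)
    · exact ((Real.measurable_log.comp hfm).mul
        (by simpa using hfm.ennreal_ofReal.ennreal_toReal)).aestronglyMeasurable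
    · rw [Real.norm_eq_abs, ENNReal.toReal_ofReal (hf0 x), abs_mul,
        abs_of_nonneg (hf0 x), mul_comm]
  have hlogGR : ∀ x, Real.log (GR x)
      = m * Real.log ((√(2 * π * ε))⁻¹) - ‖x - a‖ ^ 2 / (2 * ε) := by
    intro x
    have hc : (0:ℝ) < (√(2 * π * ε))⁻¹ := by
      have : (0:ℝ) < √(2 * π * ε) := Real.sqrt_pos.mpr (by positivity)
      positivity
    rw [hGR]
    rw [Real.log_mul (by positivity) (Real.exp_ne_zero _), Real.log_pow, Real.log_exp]
    ring
  have hintsq : Integrable (fun x => ‖x - a‖ ^ 2) q := integrable_sq_sub hmom a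
  have hintGR : Integrable (fun x => Real.log (GR x)) q := by
    simp_rw [hlogGR]
    exact (integrable_const _).sub (hintsq.div_const _)
  have hkl : klReal q (gaussianE a ε.toNNReal)
      = ∫ x, (Real.log (f x) - Real.log (GR x)) ∂q := by
    unfold klReal
    refine integral_congr_ae ?_
    filter_upwards [hrn, hfpos] with x h1 h2
    rw [h1, ENNReal.toReal_mul, ENNReal.toReal_inv, ENNReal.toReal_ofReal (hGRpos x).le,
      ENNReal.toReal_ofReal (hf0 x),
      Real.log_mul (inv_ne_zero (hGRpos x).ne') h2.ne', Real.log_inv]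
    ring
  rw [hkl, integral_sub hintlog hintGR]
  have : ∫ x, Real.log (GR x) ∂q
      = m * Real.log ((√(2 * π * ε))⁻¹) - (∫ x, ‖x - a‖ ^ 2 ∂q) / (2 * ε) := by
    simp_rw [hlogGR]
    rw [integral_sub (integrable_const _) (hintsq.div_const _), integral_const,
      probReal_univ, one_smul, integral_div]
  rw [this, Real.log_inv]
  ring

lemma hlog_aux : Tendsto (fun ε : ℝ => Real.log (√(2 * π * ε)) * ε)
    (nhdsWithin 0 (Set.Ioi 0)) (nhds 0) := by
  have hxlogx : Tendsto (fun x : ℝ => Real.log x * x) (nhdsWithin 0 (Set.Ioi 0)) (nhds 0) := by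
    have := tendsto_log_mul_rpow_nhdsGT_zero one_pos
    simpa [Real.rpow_one] using this
  have t1 : Tendsto (fun ε : ℝ => (Real.log (2 * π) / 2) * ε)
      (nhdsWithin 0 (Set.Ioi 0)) (nhds 0) := by
    have hc : Continuous (fun ε : ℝ => (Real.log (2 * π) / 2) * ε) := by fun_prop
    have h := hc.tendsto 0
    rw [mul_zero] at h
    exact h.mono_left nhdsWithin_le_nhds
  have t2 : Tendsto (fun x : ℝ => Real.log x * x / 2) (nhdsWithin 0 (Set.Ioi 0)) (nhds 0) := by
    simpa using hxlogx.div_const 2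
  have hsum := t1.add t2
  rw [add_zero] at hsum
  refine hsum.congr' ?_
  filter_upwards [self_mem_nhdsWithin] with ε (hε : 0 < ε)
  rw [Real.log_sqrt (by positivity), Real.log_mul (by positivity) hε.ne']
  ring

theorem stmt_13 (m n : ℕ)
    (q q' : Measure (EuclideanSpace ℝ (Fin m)))
    [IsProbabilityMeasure q] [IsProbabilityMeasure q']
    (f f' : EuclideanSpace ℝ (Fin m) → ℝ)
    (hf0 : ∀ z, 0 ≤ f z) (hfm : Measurable f)
    (hf0' : ∀ z, 0 ≤ f' z) (hfm' : Measurable f')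
    (hq : q = volume.withDensity (fun z => ENNReal.ofReal (f z)))
    (hq' : q' = volume.withDensity (fun z => ENNReal.ofReal (f' z)))
    (hent : Integrable (fun z => f z * |Real.log (f z)|) volume)
    (hent' : Integrable (fun z => f' z * |Real.log (f' z)|) volume)
    (hmom : Integrable (fun z => ‖z‖ ^ 2) q)
    (hmom' : Integrable (fun z => ‖z‖ ^ 2) q')
    (z : Fin n → EuclideanSpace ℝ (Fin m))
    (hpos : 0 < ∑ i, ∫ x, ‖x - z i‖ ^ 2 ∂q') :
    Tendsto
      (fun ε : ℝ =>
        (∑ i, klReal q (gaussianE (z i) ε.toNNReal)) /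
          (∑ i, klReal q' (gaussianE (z i) ε.toNNReal)))
      (nhdsWithin 0 (Set.Ioi 0))
      (nhds ((∑ i, ∫ x, ‖x - z i‖ ^ 2 ∂q) / (∑ i, ∫ x, ‖x - z i‖ ^ 2 ∂q'))) := by
  set S : ℝ := ∑ i, ∫ x, ‖x - z i‖ ^ 2 ∂q with hS
  set S' : ℝ := ∑ i, ∫ x, ‖x - z i‖ ^ 2 ∂q' with hS'
  set E : ℝ := ∫ x, Real.log (f x) ∂q with hE
  set E' : ℝ := ∫ x, Real.log (f' x) ∂q' with hE'
  have hsum : ∀ ε : ℝ, 0 < ε →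
      (∑ i, klReal q (gaussianE (z i) ε.toNNReal))
        = n * E + n * m * Real.log (√(2 * π * ε)) + S / (2 * ε) := by
    intro ε hε
    have : ∀ i : Fin n, klReal q (gaussianE (z i) ε.toNNReal)
        = E + m * Real.log (√(2 * π * ε)) + (∫ x, ‖x - z i‖ ^ 2 ∂q) / (2 * ε) :=
      fun i => klReal_gaussianE q f hf0 hfm hq hent hmom (z i) hε
    rw [Finset.sum_congr rfl fun i _ => this i]
    rw [Finset.sum_add_distrib, Finset.sum_add_distrib, Finset.sum_const, Finset.sum_const,
      ← Finset.sum_div, Finset.card_univ, Fintype.card_fin, nsmul_eq_mul, nsmul_eq_mul]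
    ring
  have hsum' : ∀ ε : ℝ, 0 < ε →
      (∑ i, klReal q' (gaussianE (z i) ε.toNNReal))
        = n * E' + n * m * Real.log (√(2 * π * ε)) + S' / (2 * ε) := by
    intro ε hε
    have : ∀ i : Fin n, klReal q' (gaussianE (z i) ε.toNNReal)
        = E' + m * Real.log (√(2 * π * ε)) + (∫ x, ‖x - z i‖ ^ 2 ∂q') / (2 * ε) :=
      fun i => klReal_gaussianE q' f' hf0' hfm' hq' hent' hmom' (z i) hε
    rw [Finset.sum_congr rfl fun i _ => this i]
    rw [Finset.sum_add_distrib, Finset.sum_add_distrib, Finset.sum_const, Finset.sum_const,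
      ← Finset.sum_div, Finset.card_univ, Fintype.card_fin, nsmul_eq_mul, nsmul_eq_mul]
    ring
  have hgen : ∀ (c : ℝ) (T : ℝ), Tendsto (fun ε : ℝ =>
      (c + (n : ℝ) * m * Real.log (√(2 * π * ε)) + T / (2 * ε)) * (2 * ε))
      (nhdsWithin 0 (Set.Ioi 0)) (nhds T) := by
    intro c T
    have t1 : Tendsto (fun ε : ℝ => c * (2 * ε)) (nhdsWithin 0 (Set.Ioi 0)) (nhds 0) := by
      have hc : Continuous (fun ε : ℝ => c * (2 * ε)) := by fun_prop
      have h := hc.tendsto 0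
      rw [mul_zero, mul_zero] at h
      exact h.mono_left nhdsWithin_le_nhds
    have t2 : Tendsto (fun ε : ℝ => ((n : ℝ) * m * 2) * (Real.log (√(2 * π * ε)) * ε))
        (nhdsWithin 0 (Set.Ioi 0)) (nhds 0) := by
      simpa using hlog_aux.const_mul ((n : ℝ) * m * 2)
    have hcomb := (t1.add t2).add (tendsto_const_nhds (x := T)
      (f := nhdsWithin (0:ℝ) (Set.Ioi 0)))
    rw [add_zero, zero_add] at hcomb
    refine hcomb.congr' ?_
    filter_upwards [self_mem_nhdsWithin] with ε (hε : 0 < ε)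
    have h2ε : (2 : ℝ) * ε ≠ 0 := by positivity
    field_simp
  have h1 : Tendsto (fun ε : ℝ =>
      (∑ i, klReal q (gaussianE (z i) ε.toNNReal)) * (2 * ε))
      (nhdsWithin 0 (Set.Ioi 0)) (nhds S) := by
    refine (hgen (n * E) S).congr' ?_
    filter_upwards [self_mem_nhdsWithin] with ε (hε : 0 < ε)
    rw [hsum ε hε]
  have h2 : Tendsto (fun ε : ℝ =>
      (∑ i, klReal q' (gaussianE (z i) ε.toNNReal)) * (2 * ε))
      (nhdsWithin 0 (Set.Ioi 0)) (nhds S') := by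
    refine (hgen (n * E') S').congr' ?_
    filter_upwards [self_mem_nhdsWithin] with ε (hε : 0 < ε)
    rw [hsum' ε hε]
  have h3 := h1.div h2 hpos.ne'
  refine h3.congr' ?_
  filter_upwards [self_mem_nhdsWithin] with ε (hε : 0 < ε)
  simp only [Pi.div_apply]
  rw [mul_div_mul_right _ _ (by positivity : (2:ℝ) * ε ≠ 0)]
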